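/- Let σ, ρ > 0, γ ≠ 0, let g : ℝ → ℝ be differentiable with g > 0, and let W : ℝ → ℝ be twice differentiable. Define u(S,t) = S·W(ln S − γt) for S > 0, and suppose the denominator 1 − ρ·(g'(ρ(W(z)+W'(z)))/g(ρ(W(z)+W'(z))))·(W'(z)+W''(z)) is nonzero for all z ∈ ℝ (note that u_S = W + W' and S·u_SS = W' + W'' at z = ln S − γt). Then u solves the general illiquid-market PDE u_t + (1/2)·σ²S²·u_SS / (1 − ρ·(g'(ρu_S)/g(ρu_S))·S·u_SS)² = 0 if and only if W satisfies the second-order ODE 2γ·W'(z) = σ²·(W'(z)+W''(z)) / (1 − ρ·(g'(ρ(W(z)+W'(z)))/g(ρ(W(z)+W'(z))))·(W'(z)+W''(z)))² for all z ∈ ℝ. (This is the reduction of the general model under the subalgebra h₃^g = ⟨V₁cos φ + V₃sin φ⟩ with γ = cotan φ, using the invariants z = ln S − γt, W = u/S.) -/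

import Mathlib

open Real Set

/-- Partial derivative of `u(S,t)` with respect to `S`. -/
noncomputable def pS (u : ℝ → ℝ → ℝ) (S t : ℝ) : ℝ := deriv (fun s => u s t) S

/-- Second partial derivative of `u(S,t)` with respect to `S`. -/
noncomputable def pSS (u : ℝ → ℝ → ℝ) (S t : ℝ) : ℝ := deriv (fun s => pS u s t) S

/-- Partial derivative of `u(S,t)` with respect to `t`. -/
noncomputable def pt (u : ℝ → ℝ → ℝ) (S t : ℝ) : ℝ := deriv (fun τ => u S τ) t

/-- Reduction of the general illiquid-market model under the subalgebra
`h₃^g = ⟨V₁ cos φ + V₃ sin φ⟩`, `γ = cotan φ` (invariants `z = ln S − γt`,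
`W = u/S`): the ansatz `u(S,t) = S·W(ln S − γt)` solves the PDE iff `W`
satisfies the second-order ODE
`2γ W' = σ² (W' + W'') / (1 − ρ (g'(ρ(W+W'))/g(ρ(W+W'))) (W' + W''))²`. -/
theorem general_model_reduction_h3
    (σ ρ γ : ℝ) (hσ : 0 < σ) (hρ : 0 < ρ) (hγ : γ ≠ 0)
    (g : ℝ → ℝ) (hg : Differentiable ℝ g) (hgpos : ∀ x, 0 < g x)
    (W : ℝ → ℝ) (hW : Differentiable ℝ W) (hW' : Differentiable ℝ (deriv W))
    (u : ℝ → ℝ → ℝ) (hu : u = fun S t => S * W (Real.log S - γ * t))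
    (hden : ∀ z : ℝ,
      1 - ρ * (deriv g (ρ * (W z + deriv W z)) / g (ρ * (W z + deriv W z))) *
        (deriv W z + deriv (deriv W) z) ≠ 0) :
    (∀ S ∈ Set.Ioi (0 : ℝ), ∀ t : ℝ,
      pt u S t + (1 / 2) * σ ^ 2 * S ^ 2 * pSS u S t /
        (1 - ρ * (deriv g (ρ * pS u S t) / g (ρ * pS u S t)) * S * pSS u S t) ^ 2 = 0)
    ↔
    (∀ z : ℝ,
      2 * γ * deriv W z =
        σ ^ 2 * (deriv W z + deriv (deriv W) z) /
          (1 - ρ * (deriv g (ρ * (W z + deriv W z)) / g (ρ * (W z + deriv W z))) *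
            (deriv W z + deriv (deriv W) z)) ^ 2) := by
  subst hu
  -- derivative computations
  have hpt : ∀ S : ℝ, 0 < S → ∀ t : ℝ,
      pt (fun S t => S * W (Real.log S - γ * t)) S t
        = S * (deriv W (Real.log S - γ * t) * (-γ)) := by
    intro S hS t
    have h1 : HasDerivAt (fun τ : ℝ => Real.log S - γ * τ) (-γ) t := by
      exact (((hasDerivAt_id t).const_mul γ).const_sub (Real.log S)).congr_deriv (by simp)
    have h2 : HasDerivAt (fun τ : ℝ => W (Real.log S - γ * τ))
        (deriv W (Real.log S - γ * t) * (-γ)) t :=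
      (hW (Real.log S - γ * t)).hasDerivAt.comp t h1
    have h3 := h2.const_mul S
    simpa [pt] using h3.deriv
  have hpS : ∀ S : ℝ, 0 < S → ∀ t : ℝ,
      pS (fun S t => S * W (Real.log S - γ * t)) S t
        = W (Real.log S - γ * t) + deriv W (Real.log S - γ * t) := by
    intro S hS t
    have hz : HasDerivAt (fun s : ℝ => Real.log s - γ * t) S⁻¹ S := by
      exact ((Real.hasDerivAt_log hS.ne').sub_const (γ * t))
    have h2 : HasDerivAt (fun s : ℝ => W (Real.log s - γ * t))
        (deriv W (Real.log S - γ * t) * S⁻¹) S :=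
      (hW (Real.log S - γ * t)).hasDerivAt.comp S hz
    have h3 : HasDerivAt (fun s : ℝ => s * W (Real.log s - γ * t))
        (1 * W (Real.log S - γ * t) + S * (deriv W (Real.log S - γ * t) * S⁻¹)) S :=
      (hasDerivAt_id S).mul h2
    have : pS (fun S t => S * W (Real.log S - γ * t)) S t
        = 1 * W (Real.log S - γ * t) + S * (deriv W (Real.log S - γ * t) * S⁻¹) := by
      simpa [pS] using h3.deriv
    rw [this]
    field_simp
  have hpSS : ∀ S : ℝ, 0 < S → ∀ t : ℝ,
      pSS (fun S t => S * W (Real.log S - γ * t)) S t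
        = (deriv W (Real.log S - γ * t) + deriv (deriv W) (Real.log S - γ * t)) * S⁻¹ := by
    intro S hS t
    have heq : (fun s => pS (fun S t => S * W (Real.log S - γ * t)) s t)
        =ᶠ[nhds S] (fun s => W (Real.log s - γ * t) + deriv W (Real.log s - γ * t)) := by
      filter_upwards [Ioi_mem_nhds hS] with s hs
      exact hpS s hs t
    have hz : HasDerivAt (fun s : ℝ => Real.log s - γ * t) S⁻¹ S := by
      exact ((Real.hasDerivAt_log hS.ne').sub_const (γ * t))
    have h2 : HasDerivAt (fun s : ℝ => W (Real.log s - γ * t))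
        (deriv W (Real.log S - γ * t) * S⁻¹) S :=
      (hW (Real.log S - γ * t)).hasDerivAt.comp S hz
    have h3 : HasDerivAt (fun s : ℝ => deriv W (Real.log s - γ * t))
        (deriv (deriv W) (Real.log S - γ * t) * S⁻¹) S :=
      by have h5 := (hW' (Real.log S - γ * t)).hasDerivAt.comp S hz; exact h5
    have h4 := h2.add h3
    rw [pSS, heq.deriv_eq]
    exact h4.deriv.trans (by ring)
  constructor
  · intro hpde z
    have hS : (0:ℝ) < Real.exp z := Real.exp_pos z
    have h := hpde (Real.exp z) hS 0
    have hz : Real.log (Real.exp z) - γ * 0 = z := by simp [Real.log_exp]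
    rw [hpt _ hS 0, hpS _ hS 0, hpSS _ hS 0, hz] at h
    set A := deriv W z + deriv (deriv W) z with hA
    set q := ρ * (deriv g (ρ * (W z + deriv W z)) / g (ρ * (W z + deriv W z))) with hq
    have hD : 1 - q * A ≠ 0 := hden z
    have hE : Real.exp z ≠ 0 := hS.ne'
    have hrw : 1 - q * Real.exp z * (A * (Real.exp z)⁻¹) = 1 - q * A := by
      field_simp
    rw [hrw] at h
    have h2 : (Real.exp z)^2 * (2*γ*deriv W z - σ^2*A/(1-q*A)^2) = 0 := by
      have key : 1 / 2 * σ ^ 2 * Real.exp z ^ 2 * (A * (Real.exp z)⁻¹) / (1 - q * A) ^ 2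
          = Real.exp z / 2 * (σ ^ 2 * A / (1 - q * A) ^ 2) := by
        field_simp
      rw [key] at h
      linear_combination (-2 * Real.exp z) * h
    rcases mul_eq_zero.1 h2 with h3 | h3
    · exact absurd h3 (pow_ne_zero 2 hE)
    · linarith
  · intro hode S hS t
    have hS' : (0:ℝ) < S := hS
    rw [hpt _ hS' t, hpS _ hS' t, hpSS _ hS' t]
    set z := Real.log S - γ * t with hzdef
    have h := hode z
    set A := deriv W z + deriv (deriv W) z with hA
    set q := ρ * (deriv g (ρ * (W z + deriv W z)) / g (ρ * (W z + deriv W z))) with hq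
    have hD : 1 - q * A ≠ 0 := hden z
    have hSne : S ≠ 0 := hS'.ne'
    have hrw : 1 - q * S * (A * S⁻¹) = 1 - q * A := by field_simp
    rw [hrw]
    have key : 1 / 2 * σ ^ 2 * S ^ 2 * (A * S⁻¹) / (1 - q * A) ^ 2
        = S / 2 * (σ ^ 2 * A / (1 - q * A) ^ 2) := by
      field_simp
    rw [key, ← h]
    ring
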